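/- Let k ∈ ℕ₀, μ ∈ ℂ, and x ∈ (-1,1). Then P_k^{-μ}(x) = 2^μ (1+x)^{-μ} · k! · ∑_{j=0}^k ((2μ)_j / ((k-j)! · j!)) · ((1-x)/(1+x))^{j/2} · P_{k+μ}^{-j-μ}(x). -/

import Mathlib

noncomputable def pochC (a : ℂ) (n : ℕ) : ℂ := (ascPochhammer ℂ n).eval a

/-- Ferrers function of the first kind `P_ν^μ(x)`. -/
noncomputable def ferrersP (ν μ : ℂ) (x : ℝ) : ℂ :=
  (((1 + x) / (1 - x) : ℝ) : ℂ) ^ (μ / 2) *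
    ∑' n : ℕ, pochC (-ν) n * pochC (ν + 1) n /
        (Complex.Gamma ((n : ℂ) + 1 - μ) * (n.factorial : ℂ)) *
      (((1 - x) / 2 : ℝ) : ℂ) ^ n

open Finset

lemma pochC_zero (a : ℂ) : pochC a 0 = 1 := by simp [pochC]

lemma pochC_one (a : ℂ) : pochC a 1 = a := by simp [pochC]

lemma pochC_succ (a : ℂ) (n : ℕ) : pochC a (n+1) = pochC a n * (a + n) := by
  simp [pochC, ascPochhammer_succ_right, Polynomial.eval_mul]

lemma pochC_succ_left (a : ℂ) (n : ℕ) : pochC a (n+1) = a * pochC (a+1) n := by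
  simp only [pochC, ascPochhammer_succ_left, Polynomial.eval_mul, Polynomial.eval_comp,
    Polynomial.eval_X, Polynomial.eval_add, Polynomial.eval_one]

lemma pochC_eq_prod (a : ℂ) (n : ℕ) : pochC a n = ∏ i ∈ range n, (a + i) := by
  induction n with
  | zero => simp [pochC_zero]
  | succ n ih => rw [pochC_succ, ih, prod_range_succ]

lemma pochC_neg_nat_eq_zero {p n : ℕ} (h : p < n) : pochC (-(p:ℂ)) n = 0 := by
  rw [pochC_eq_prod]
  apply Finset.prod_eq_zero (Finset.mem_range.2 h)
  simp

lemma pochC_neg_nat {p q : ℕ} (h : q ≤ p) :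
    pochC (-(p:ℂ)) q * ((p-q).factorial : ℂ) = (-1)^q * (p.factorial : ℂ) := by
  induction q with
  | zero => simp [pochC_zero]
  | succ q ih =>
    have hq : q ≤ p := le_of_lt h
    have h1 : p - q = (p - (q+1)) + 1 := by omega
    rw [pochC_succ]
    have h2 : -(p:ℂ) + q = -(((p - q : ℕ)):ℂ) := by
      have : ((p - q : ℕ) : ℂ) = (p:ℂ) - q := by
        push_cast [Nat.cast_sub hq]; ring
      rw [this]; ring
    calc pochC (-(p:ℂ)) q * (-(p:ℂ) + q) * ((p-(q+1)).factorial : ℂ)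
        = pochC (-(p:ℂ)) q * (((p-q):ℕ):ℂ) * ((p-(q+1)).factorial : ℂ) * (-1) := by
          rw [h2]; ring
      _ = pochC (-(p:ℂ)) q * (((p-q).factorial : ℂ)) * (-1) := by
          rw [h1, Nat.factorial_succ]
          push_cast [← h1]
          ring
      _ = (-1)^(q+1) * (p.factorial : ℂ) := by rw [ih hq]; ring

/-- Vandermonde-type identity: `∑ (-1)^j C(N,j) (a)_j (c+j)_{N-j} = (c-a)_N`. -/
lemma starstar (N : ℕ) : ∀ a c : ℂ,
    ∑ j ∈ range (N+1), (-1:ℂ)^j * (N.choose j : ℂ) * pochC a j * pochC (c+j) (N-j)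
      = pochC (c-a) N := by
  induction N with
  | zero => intro a c; simp [pochC_zero]
  | succ N ih =>
    intro a c
    rw [Finset.sum_range_succ' _ (N+1)]
    have key : ∀ j ∈ range (N+1),
        (-1:ℂ)^(j+1) * (((N+1).choose (j+1) : ℕ) : ℂ) * pochC a (j+1) * pochC (c+((j+1:ℕ):ℂ)) (N+1-(j+1))
        = ((-1:ℂ)^(j+1) * (N.choose j : ℂ) * pochC a (j+1) * pochC (c+((j+1:ℕ):ℂ)) (N+1-(j+1)))
          + ((-1:ℂ)^(j+1) * (N.choose (j+1) : ℂ) * pochC a (j+1) * pochC (c+((j+1:ℕ):ℂ)) (N+1-(j+1))) := by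
      intro j hj
      rw [Nat.choose_succ_succ]
      push_cast
      ring
    rw [Finset.sum_congr rfl key, Finset.sum_add_distrib]
    have p1 : ∑ j ∈ range (N+1), ((-1:ℂ)^(j+1) * (N.choose j : ℂ) * pochC a (j+1) * pochC (c+((j+1:ℕ):ℂ)) (N+1-(j+1)))
        = -(a * pochC (c - a) N) := by
      have ihs := ih (a+1) (c+1)
      calc ∑ j ∈ range (N+1), ((-1:ℂ)^(j+1) * (N.choose j : ℂ) * pochC a (j+1) * pochC (c+((j+1:ℕ):ℂ)) (N+1-(j+1)))
          = -a * ∑ j ∈ range (N+1), ((-1:ℂ)^j * (N.choose j : ℂ) * pochC (a+1) j * pochC ((c+1)+j) (N-j)) := by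
            rw [Finset.mul_sum]
            apply Finset.sum_congr rfl
            intro j hj
            have h1 : N + 1 - (j+1) = N - j := by omega
            rw [h1, pochC_succ_left]
            have hc : c + (((j+1:ℕ)):ℂ) = (c+1) + j := by push_cast; ring
            rw [hc]
            ring
        _ = -(a * pochC (c - a) N) := by
            rw [ihs]
            have h2 : c + 1 - (a+1) = c - a := by ring
            rw [h2]; ring
    have p2 : ∑ j ∈ range (N+1), ((-1:ℂ)^(j+1) * (N.choose (j+1) : ℂ) * pochC a (j+1) * pochC (c+((j+1:ℕ):ℂ)) (N+1-(j+1)))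
          + (-1:ℂ)^0 * (((N+1).choose 0 : ℕ) : ℂ) * pochC a 0 * pochC (c+((0:ℕ):ℂ)) (N+1-0)
        = (c + N) * pochC (c-a) N := by
      have expand : ∀ i ∈ range (N+1), (-1:ℂ)^i * (N.choose i : ℂ) * pochC a i * pochC (c+(i:ℂ)) (N+1-i)
          = ((-1:ℂ)^i * (N.choose i : ℂ) * pochC a i * pochC (c+(i:ℂ)) (N-i)) * (c+N) := by
        intro i hi
        have hi' : i ≤ N := by simpa [Nat.lt_succ_iff] using Finset.mem_range.1 hi
        have h1 : N + 1 - i = (N-i) + 1 := by omega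
        rw [h1, pochC_succ]
        have h3 : c + (i:ℂ) + ((N - i : ℕ):ℂ) = c + N := by
          push_cast [Nat.cast_sub hi']; ring
        rw [h3]; ring
      have full : ∑ i ∈ range (N+2), ((-1:ℂ)^i * (N.choose i : ℂ) * pochC a i * pochC (c+(i:ℂ)) (N+1-i))
          = (c+N) * pochC (c-a) N := by
        rw [Finset.sum_range_succ]
        simp only [Nat.choose_succ_self, Nat.cast_zero]
        rw [Finset.sum_congr rfl expand, ← Finset.sum_mul, ih a c]
        ring
      rw [Finset.sum_range_succ' _ (N+1)] at full
      simp only [Nat.choose_zero_right, Nat.cast_one] at full ⊢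
      exact full
    rw [add_assoc, p1, p2, pochC_succ]
    ring

section SS
variable {R : Type*} [CommRing R]

/-- generic ascending Pochhammer evaluation -/
noncomputable def ppoch (p : R) (n : ℕ) : R := (ascPochhammer R n).eval p

lemma ppoch_zero (p : R) : ppoch p 0 = 1 := by simp [ppoch]
lemma ppoch_one (p : R) : ppoch p 1 = p := by simp [ppoch]
lemma ppoch_succ (p : R) (n : ℕ) : ppoch p (n+1) = ppoch p n * (p + n) := by
  simp [ppoch, ascPochhammer_succ_right, Polynomial.eval_mul]
lemma ppoch_succ_left (p : R) (n : ℕ) : ppoch p (n+1) = p * ppoch (p+1) n := by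
  simp only [ppoch, ascPochhammer_succ_left, Polynomial.eval_mul, Polynomial.eval_comp,
    Polynomial.eval_X, Polynomial.eval_add, Polynomial.eval_one]

lemma pochC_eq_ppoch (a : ℂ) (n : ℕ) : pochC a n = ppoch a n := rfl

/-- The cleared Saalschütz sum. -/
noncomputable def TT (a b c : R) (M : ℕ) : R :=
  ∑ n ∈ Finset.range (M+1), (M.choose n : R) * ppoch a n * ppoch b n *
    ppoch (c-a-b) (M-n) * ppoch (c+n) (M-n)

lemma TT_rec (a b c : R) (M : ℕ) :
    (c + M) * TT a b c (M+1) = ((c+M) * ((c-a+(M:R))*(c-b+(M:R)))) * TT a b c M := by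
  set g : ℕ → R := fun n => Nat.rec 0 (fun j _ => -(c+j) * (M.choose j : R) * ppoch a (j+1) *
      ppoch b (j+1) * ppoch (c-a-b) (M-j) * ppoch (c+((j+1:ℕ):R)) (M-j)) n with hg
  have hg0 : g 0 = 0 := rfl
  have hgs : ∀ j : ℕ, g (j+1) = -(c+j) * (M.choose j : R) * ppoch a (j+1) *
      ppoch b (j+1) * ppoch (c-a-b) (M-j) * ppoch (c+((j+1:ℕ):R)) (M-j) := fun j => rfl
  have key : ∀ n ∈ Finset.range (M+2),
      (c+M) * (((M+1).choose n : R) * ppoch a n * ppoch b n * ppoch (c-a-b) (M+1-n) * ppoch (c+n) (M+1-n))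
      - (c+M) * ((c-a+(M:R))*(c-b+(M:R))) * ((M.choose n : R) * ppoch a n * ppoch b n * ppoch (c-a-b) (M-n) * ppoch (c+n) (M-n))
      = g (n+1) - g n := by
    intro n hn
    have hn' : n ≤ M + 1 := by simpa [Nat.lt_succ_iff] using Finset.mem_range.1 hn
    match n, hn' with
    | 0, _ =>
      rw [hgs 0, hg0]
      simp only [Nat.choose_zero_right, Nat.cast_one, Nat.cast_zero, Nat.sub_zero,
        ppoch_zero, add_zero]
      have e1 : ppoch c (M+1) = ppoch c M * (c + M) := ppoch_succ c M
      have e2 : ppoch c (M+1) = c * ppoch (c+1) M := ppoch_succ_left c M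
      have h : c * ppoch (c+1) M = ppoch c M * (c + M) := by rw [← e2, e1]
      have e3 : ppoch (c-a-b) (M+1) = ppoch (c-a-b) M * (c-a-b + M) := ppoch_succ _ M
      have hc1 : c + (((0+1:ℕ)):R) = c + 1 := by push_cast; ring
      rw [e1, e3, ppoch_one, ppoch_one, hc1]
      linear_combination (ppoch (c-a-b) M * a * b) * h
    | (j+1), hj1 =>
      match Nat.lt_or_ge j M with
      | Or.inr hjM =>
        have hjM' : j = M := by omega
        subst hjM'
        rw [hgs (j+1), hgs j]
        have h00 : j - (j+1) = 0 := by omega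
        simp only [Nat.choose_self, Nat.choose_succ_self, Nat.cast_one, Nat.cast_zero,
          Nat.sub_self, h00, ppoch_zero]
        ring
      | Or.inl hjM =>
        obtain ⟨m, hMm⟩ : ∃ m, M = j + 1 + m := ⟨M - (j+1), by omega⟩
        rw [hgs (j+1), hgs j]
        have f1 : M + 1 - (j+1) = m + 1 := by omega
        have f2 : M - (j+1) = m := by omega
        have f3 : M - j = m + 1 := by omega
        rw [f1, f2, f3]
        have ed : ppoch (c-a-b) (m+1) = ppoch (c-a-b) m * (c-a-b + m) := ppoch_succ _ m
        have eP : ppoch (c+((j+1:ℕ):R)) (m+1) = ppoch (c+((j+1:ℕ):R)) m * (c + M) := by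
          rw [ppoch_succ]
          have h5 : c + ((j+1:ℕ):R) + m = c + M := by
            rw [hMm]; push_cast; ring
          rw [h5]
        have hq : (c+((j+1:ℕ):R)) * ppoch (c+((j+1+1:ℕ):R)) m
            = ppoch (c+((j+1:ℕ):R)) m * (c + M) := by
          rw [← eP, ppoch_succ_left]
          have h6 : c + ((j+1:ℕ):R) + 1 = c + ((j+1+1:ℕ):R) := by push_cast; ring
          rw [h6]
        have ea : ppoch a (j+1+1) = ppoch a (j+1) * (a + ((j+1:ℕ):R)) := ppoch_succ a (j+1)
        have eb : ppoch b (j+1+1) = ppoch b (j+1) * (b + ((j+1:ℕ):R)) := ppoch_succ b (j+1)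
        have pascal : (((M+1).choose (j+1) : ℕ) : R) = (M.choose j : R) + (M.choose (j+1) : R) := by
          rw [Nat.choose_succ_succ]; push_cast; ring
        have hch : (M.choose (j+1) : R) * ((j+1:ℕ):R) = (M.choose j : R) * ((m+1:ℕ):R) := by
          have h7 := Nat.choose_succ_right_eq M j
          rw [f3] at h7
          exact_mod_cast congrArg (Nat.cast : ℕ → R) h7
        have hMc : (M : R) = ((j:R) + 1) + (m:R) := by rw [hMm]; push_cast; ring
        rw [ed, eP, ea, eb, pascal]
        set A := ppoch a (j+1) with hA
        set B := ppoch b (j+1) with hB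
        set D := ppoch (c-a-b) m with hD
        set P := ppoch (c+((j+1:ℕ):R)) m with hP
        set Q := ppoch (c+((j+1+1:ℕ):R)) m with hQ
        push_cast at hq hch ⊢
        rw [hMc] at hq ⊢
        linear_combination (A*B*D*((M.choose (j+1) : R))*(a+((j:R)+1))*(b+((j:R)+1)))*hq - (A*B*D*P*(c+((j:R)+1)+(m:R))*(c-a-b+(m:R)))*hch
  have sum_eq := Finset.sum_congr rfl key
  rw [Finset.sum_sub_distrib, Finset.sum_range_sub g] at sum_eq
  have hgtop : g (M+2) = 0 := by
    rw [hgs (M+1)]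
    simp [Nat.choose_succ_self]
  rw [hgtop, hg0, sub_zero] at sum_eq
  have lhs1 : ∑ n ∈ Finset.range (M+2), (c+M) * (((M+1).choose n : R) * ppoch a n * ppoch b n * ppoch (c-a-b) (M+1-n) * ppoch (c+n) (M+1-n)) = (c+M) * TT a b c (M+1) := by
    rw [TT, Finset.mul_sum]
  have lhs2 : ∑ n ∈ Finset.range (M+2), (c+M) * ((c-a+(M:R))*(c-b+(M:R))) * ((M.choose n : R) * ppoch a n * ppoch b n * ppoch (c-a-b) (M-n) * ppoch (c+n) (M-n)) = (c+M) * ((c-a+(M:R))*(c-b+(M:R))) * TT a b c M := by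
    rw [TT, Finset.mul_sum, Finset.sum_range_succ]
    simp [Nat.choose_succ_self]
  rw [lhs1, lhs2] at sum_eq
  linear_combination sum_eq
end SS

lemma TT_closed {R : Type*} [CommRing R] [IsDomain R] (a b c : R)
    (hc : ∀ i : ℕ, c + (i:R) ≠ 0) : ∀ M, TT a b c M = ppoch (c-a) M * ppoch (c-b) M := by
  intro M
  induction M with
  | zero => simp [TT, ppoch_zero]
  | succ M ih =>
    have h := TT_rec a b c M
    rw [ih] at h
    have hcM : c + (M:R) ≠ 0 := hc M
    have h2 : (c+(M:R)) * TT a b c (M+1)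
        = (c+(M:R)) * (((c-a+(M:R))*(c-b+(M:R))) * (ppoch (c-a) M * ppoch (c-b) M)) := by
      rw [h]; ring
    have h3 := mul_left_cancel₀ hcM h2
    rw [h3, ppoch_succ, ppoch_succ]
    ring

/-- Saalschütz-type identity over ℂ. -/
lemma SS_c (a b c : ℂ) (M : ℕ) :
    ∑ n ∈ Finset.range (M+1), (M.choose n : ℂ) * pochC a n * pochC b n *
      pochC (c-a-b) (M-n) * pochC (c+n) (M-n)
      = pochC (c-a) M * pochC (c-b) M := by
  -- work in Polynomial ℂ with c := X, then evaluate
  have key := TT_closed (Polynomial.C a) (Polynomial.C b) (Polynomial.X : Polynomial ℂ)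
    (fun i => by
      have : (i : Polynomial ℂ) = Polynomial.C (i:ℂ) := by
        simp [Polynomial.C_eq_natCast]
      rw [this]
      exact Polynomial.X_add_C_ne_zero (i:ℂ)) M
  have hmap : ∀ (p : Polynomial ℂ) (n : ℕ),
      Polynomial.eval c (ppoch p n) = pochC (Polynomial.eval c p) n := by
    intro p n
    induction n with
    | zero => simp [ppoch_zero, pochC_zero]
    | succ n ih => rw [ppoch_succ, pochC_succ, Polynomial.eval_mul, ih]; simp
  have := congrArg (Polynomial.eval c) key
  rw [Polynomial.eval_mul, hmap, hmap] at this
  simp only [Polynomial.eval_sub, Polynomial.eval_X, Polynomial.eval_C] at this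
  rw [← this]
  rw [TT, Polynomial.eval_finset_sum]
  apply Finset.sum_congr rfl
  intro n hn
  simp only [Polynomial.eval_mul, hmap, Polynomial.eval_natCast, Polynomial.eval_sub,
    Polynomial.eval_add, Polynomial.eval_X, Polynomial.eval_C]

lemma Gamma_inv_shift (z : ℂ) (m : ℕ) :
    (Complex.Gamma z)⁻¹ = pochC z m * (Complex.Gamma (z + m))⁻¹ := by
  by_cases hz : Complex.Gamma z = 0
  · rw [hz]
    obtain ⟨p, hp⟩ := (Complex.Gamma_eq_zero_iff z).1 hz
    by_cases hmp : m ≤ p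
    · have : Complex.Gamma (z + m) = 0 := by
        rw [Complex.Gamma_eq_zero_iff (z + (m:ℂ))]
        exact ⟨p - m, by rw [hp]; push_cast [Nat.cast_sub hmp]; ring⟩
      rw [this]
      simp
    · have : pochC z m = 0 := by
        rw [hp]
        exact pochC_neg_nat_eq_zero (by omega)
      rw [this]
      simp
  · induction m with
    | zero => simp [pochC_zero]
    | succ m ih =>
      have hzm : z + m ≠ 0 := by
        intro h
        apply hz
        rw [Complex.Gamma_eq_zero_iff z]
        exact ⟨m, by linear_combination h⟩
      have hG : Complex.Gamma (z + (m+1:ℕ)) = (z + m) * Complex.Gamma (z + m) := by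
        have := Complex.Gamma_add_one (z + m) hzm
        rw [← this]
        push_cast
        ring_nf
      rw [hG, pochC_succ, mul_inv]
      rw [ih]
      field_simp

open Filter Topology

lemma tendsto_cast_inv_add (w : ℂ) :
    Tendsto (fun n : ℕ => ((n:ℂ) + w)⁻¹) atTop (𝓝 0) := by
  rw [tendsto_zero_iff_norm_tendsto_zero]
  have h1 : Tendsto (fun n : ℕ => ‖(n:ℂ) + w‖) atTop atTop := by
    apply tendsto_atTop_mono' atTop (show ∀ᶠ n : ℕ in atTop, (n:ℝ) - ‖w‖ ≤ ‖(n:ℂ) + w‖ from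
      Eventually.of_forall fun n => by
        calc (n:ℝ) - ‖w‖ = ‖(n:ℂ)‖ - ‖-w‖ := by simp
          _ ≤ ‖(n:ℂ) - (-w)‖ := norm_sub_norm_le _ _
          _ = ‖(n:ℂ) + w‖ := by ring_nf)
    exact tendsto_atTop_add_const_right atTop (-‖w‖) tendsto_natCast_atTop_atTop
  have := h1.inv_tendsto_atTop
  simp only [norm_inv]
  exact this

lemma eventually_ne_cast_add (w : ℂ) : ∀ᶠ n : ℕ in atTop, (n:ℂ) + w ≠ 0 := by
  have h1 : Tendsto (fun n : ℕ => ‖(n:ℂ) + w‖) atTop atTop := by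
    apply tendsto_atTop_mono' atTop (show ∀ᶠ n : ℕ in atTop, (n:ℝ) - ‖w‖ ≤ ‖(n:ℂ) + w‖ from
      Eventually.of_forall fun n => by
        calc (n:ℝ) - ‖w‖ = ‖(n:ℂ)‖ - ‖-w‖ := by simp
          _ ≤ ‖(n:ℂ) - (-w)‖ := norm_sub_norm_le _ _
          _ = ‖(n:ℂ) + w‖ := by ring_nf)
    exact tendsto_atTop_add_const_right atTop (-‖w‖) tendsto_natCast_atTop_atTop
  filter_upwards [h1.eventually_gt_atTop 0] with n hn
  intro h
  rw [h] at hn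
  simp at hn

lemma tendsto_ratio_cast (p w : ℂ) :
    Tendsto (fun n : ℕ => (p + (n:ℂ)) / ((n:ℂ) + w)) atTop (𝓝 1) := by
  have key : Tendsto (fun n : ℕ => 1 + (p - w) * ((n:ℂ) + w)⁻¹) atTop (𝓝 1) := by
    have := (tendsto_cast_inv_add w).const_mul (p - w)
    simpa using (tendsto_const_nhds (x := (1:ℂ))).add this
  apply key.congr'
  filter_upwards [eventually_ne_cast_add w] with n hn
  field_simp
  ring

lemma summable_norm_of_ratio {u φ : ℕ → ℂ} {L : ℝ} (hL : L < 1)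
    (hrec : ∀ᶠ n in atTop, u (n+1) = φ n * u n)
    (hφ : Tendsto (fun n => ‖φ n‖) atTop (𝓝 L)) :
    Summable (fun n => ‖u n‖) := by
  set r : ℝ := (max L 0 + 1)/2 with hr
  have hr1 : r < 1 := by
    have : max L 0 < 1 := by simp [hL]
    rw [hr]; linarith
  have hLr : L < r := by
    have : L ≤ max L 0 := le_max_left _ _
    rw [hr]; linarith [le_max_right L 0]
  apply summable_of_ratio_norm_eventually_le hr1
  filter_upwards [hrec, hφ.eventually_lt_const hLr] with n h1 h2
  rw [Real.norm_of_nonneg (norm_nonneg _), Real.norm_of_nonneg (norm_nonneg _), h1, norm_mul]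
  exact mul_le_mul_of_nonneg_right (le_of_lt h2) (norm_nonneg _)

/-- summability of (norms of) the Ferrers-type series -/
lemma summable_norm_ferrers_aux (a b q z : ℂ) (hz : ‖z‖ < 1) :
    Summable (fun n : ℕ =>
      ‖pochC a n * pochC b n / (Complex.Gamma ((n:ℂ) + 1 - q) * (n.factorial : ℂ)) * z ^ n‖) := by
  set φ : ℕ → ℂ := fun n => ((a + n) / ((n:ℂ) + 1)) * ((b + n) / ((n:ℂ) + (1 - q))) * z with hφdef
  apply summable_norm_of_ratio (φ := φ) (L := ‖z‖) hz
  · -- recurrence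
    filter_upwards [eventually_ne_cast_add (1 - q)] with n hn
    have hG : Complex.Gamma (((n+1:ℕ):ℂ) + 1 - q)
        = ((n:ℂ) + 1 - q) * Complex.Gamma ((n:ℂ) + 1 - q) := by
      have h0 : (n:ℂ) + 1 - q ≠ 0 := by
        intro h; apply hn; rw [← h]; ring
      have := Complex.Gamma_add_one ((n:ℂ) + 1 - q) h0
      rw [← this]
      congr 1
      push_cast
      ring
    rw [pochC_succ, pochC_succ, hG, Nat.factorial_succ, pow_succ]
    push_cast
    simp only [hφdef, div_eq_mul_inv, mul_inv]
    have e1 : (n:ℂ) + (1 - q) = (n:ℂ) + 1 - q := by ring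
    rw [e1]
    ring
  · -- tendsto of norms
    have h1 := tendsto_ratio_cast a 1
    have h2 := tendsto_ratio_cast b (1 - q)
    have key := ((h1.norm.mul h2.norm).mul (tendsto_const_nhds (x := ‖z‖)))
    simp only [norm_one, one_mul] at key
    apply key.congr
    intro n
    simp [hφdef, norm_mul]

noncomputable def bc (α : ℂ) (m : ℕ) : ℂ := pochC α m / (m.factorial : ℂ)

lemma bc_zero (α : ℂ) : bc α 0 = 1 := by simp [bc, pochC_zero]

lemma bc_succ (α : ℂ) (m : ℕ) : bc α (m+1) * ((m:ℂ)+1) = bc α m * (α + m) := by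
  have hm : ((m:ℂ)+1) ≠ 0 := Nat.cast_add_one_ne_zero m
  have hf : ((m.factorial:ℂ)) ≠ 0 := Nat.cast_ne_zero.2 (Nat.factorial_ne_zero m)
  rw [bc, bc, pochC_succ, Nat.factorial_succ]
  push_cast
  field_simp

lemma summable_norm_bc (α : ℂ) {z : ℂ} (hz : ‖z‖ < 1) :
    Summable (fun m : ℕ => ‖bc α m * z ^ m‖) := by
  apply summable_norm_of_ratio (φ := fun m => ((α + m) / ((m:ℂ) + 1)) * z) (L := ‖z‖) hz
  · apply Eventually.of_forall
    intro m
    have h1 : ((m:ℂ)+1) ≠ 0 := Nat.cast_add_one_ne_zero m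
    have h2 := bc_succ α m
    rw [pow_succ]
    field_simp
    linear_combination z^m * z * h2
  · have h1 := (tendsto_ratio_cast α 1).norm.mul (tendsto_const_nhds (x := ‖z‖))
    simp only [norm_one, one_mul] at h1
    apply h1.congr
    intro n
    rw [← norm_mul]

lemma summable_norm_bcd (α : ℂ) {z : ℂ} (hz : ‖z‖ < 1) :
    Summable (fun m : ℕ => ‖bc α m * m * z ^ (m-1)‖) := by
  apply summable_norm_of_ratio (φ := fun m => ((α + m) / (m:ℂ)) * z) (L := ‖z‖) hz
  · rw [eventually_atTop]
    refine ⟨1, fun m hm => ?_⟩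
    obtain ⟨j, rfl⟩ : ∃ j, m = j + 1 := ⟨m - 1, by omega⟩
    have h1 : ((j:ℂ)+1) ≠ 0 := Nat.cast_add_one_ne_zero j
    have h2 := bc_succ α (j+1)
    have e1 : j + 1 + 1 - 1 = (j+1-1) + 1 := by omega
    rw [e1, pow_succ]
    have e2 : j + 1 - 1 = j := by omega
    rw [e2]
    have h3 : (α + ((j+1:ℕ):ℂ))/(((j+1:ℕ)):ℂ) * z * (bc α (j+1) * (((j+1:ℕ)):ℂ) * z^j)
        = (α + ((j:ℂ)+1)) * bc α (j+1) * z^j * z := by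
      push_cast
      field_simp
    push_cast at h2 h3 ⊢
    rw [h3]
    linear_combination (z^j * z) * h2
  · have h0 : Tendsto (fun n : ℕ => (α + (n:ℂ))/((n:ℂ))) atTop (𝓝 1) := by
      have := tendsto_ratio_cast α 0
      simpa using this
    have h1 := h0.norm.mul (tendsto_const_nhds (x := ‖z‖))
    simp only [norm_one, one_mul] at h1
    apply h1.congr
    intro n
    rw [← norm_mul]

/-- the binomial-type power series function -/
noncomputable def bfun (α : ℂ) (y : ℝ) : ℂ := ∑' m : ℕ, bc α m * ((y:ℝ):ℂ) ^ m
noncomputable def bfun' (α : ℂ) (y : ℝ) : ℂ := ∑' m : ℕ, bc α m * m * ((y:ℝ):ℂ) ^ (m-1)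

lemma norm_coe_lt {y : ℝ} (h : |y| < 1) : ‖((y:ℝ):ℂ)‖ < 1 := by
  rwa [Complex.norm_real, Real.norm_eq_abs]

lemma bfun_hasDerivAt (α : ℂ) {y : ℝ} (hy : |y| < 1) :
    HasDerivAt (bfun α) (bfun' α y) y := by
  set r : ℝ := (|y| + 1) / 2 with hr
  have hr0 : 0 ≤ r := by positivity
  have hyr : |y| < r := by rw [hr]; linarith
  have hr1 : r < 1 := by rw [hr]; linarith
  have hrC : ‖((r:ℝ):ℂ)‖ < 1 := by rwa [Complex.norm_real, Real.norm_eq_abs, abs_of_nonneg hr0]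
  apply hasDerivAt_of_tendstoUniformlyOn (l := (atTop : Filter ℕ))
    (f := fun N (y : ℝ) => ∑ m ∈ Finset.range N, bc α m * ((y:ℝ):ℂ)^m)
    (f' := fun N (y : ℝ) => ∑ m ∈ Finset.range N, bc α m * m * ((y:ℝ):ℂ)^(m-1))
    (isOpen_Ioo (a := -r) (b := r))
  · -- uniform convergence of derivatives
    apply tendstoUniformlyOn_tsum_nat (u := fun m => ‖bc α m * m * ((r:ℝ):ℂ)^(m-1)‖)
      (summable_norm_bcd α hrC)
    intro n x hx
    have hxr : |x| ≤ r := le_of_lt (abs_lt.2 ⟨hx.1, hx.2⟩)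
    simp only [norm_mul, norm_pow, Complex.norm_real, Real.norm_eq_abs, Complex.norm_natCast]
    rw [abs_of_nonneg hr0]
    gcongr
  · apply Eventually.of_forall
    intro N x hx
    apply HasDerivAt.fun_sum
    intro m hm
    have hp := (hasDerivAt_pow m ((x:ℝ):ℂ)).comp_ofReal
    simpa [mul_comm, mul_assoc] using hp.const_mul (bc α m)
  · intro x hx
    have hxC : ‖((x:ℝ):ℂ)‖ < 1 := by
      rw [Complex.norm_real, Real.norm_eq_abs]
      calc |x| < r := abs_lt.2 ⟨hx.1, hx.2⟩
        _ < 1 := hr1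
    exact ((summable_norm_bc α hxC).of_norm.hasSum.tendsto_sum_nat)
  · exact Set.mem_Ioo.2 ⟨(abs_lt.1 hyr).1, (abs_lt.1 hyr).2⟩

lemma bfun_ode (α : ℂ) {y : ℝ} (hy : |y| < 1) :
    (1 - ((y:ℝ):ℂ)) * bfun' α y = α * bfun α y := by
  have hz : ‖((y:ℝ):ℂ)‖ < 1 := norm_coe_lt hy
  have hsum : Summable (fun m : ℕ => bc α m * ((y:ℝ):ℂ)^m) := (summable_norm_bc α hz).of_norm
  have hsumd : Summable (fun m : ℕ => bc α m * m * ((y:ℝ):ℂ)^(m-1)) := (summable_norm_bcd α hz).of_norm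
  have hshift : bfun' α y = ∑' m : ℕ, bc α (m+1) * ((m:ℂ)+1) * ((y:ℝ):ℂ)^m := by
    rw [bfun', Summable.tsum_eq_zero_add hsumd]
    simp only [Nat.cast_zero, mul_zero, zero_mul, zero_add]
    apply tsum_congr
    intro m
    push_cast
    ring_nf
  have hysum : Summable (fun m : ℕ => bc α (m+1) * ((m:ℂ)+1) * ((y:ℝ):ℂ)^m) := by
    have h1 := (summable_nat_add_iff 1).2 hsumd
    apply h1.congr
    intro m
    push_cast
    ring_nf
  have hsum2 : Summable (fun m : ℕ => bc α m * m * ((y:ℝ):ℂ)^m) := by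
    have h1 := hsumd.mul_right ((y:ℝ):ℂ)
    apply h1.congr
    intro m
    match m with
    | 0 => simp
    | (j+1) => rw [pow_succ]; simp only [Nat.add_sub_cancel]; ring
  have hy' : ((y:ℝ):ℂ) * bfun' α y = ∑' m : ℕ, bc α m * m * ((y:ℝ):ℂ)^m := by
    rw [bfun', ← tsum_mul_left]
    apply tsum_congr
    intro m
    match m with
    | 0 => simp
    | (j+1) => rw [pow_succ]; simp only [Nat.add_sub_cancel]; ring
  have key : (1 - ((y:ℝ):ℂ)) * bfun' α y = bfun' α y - ((y:ℝ):ℂ) * bfun' α y := by ring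
  rw [key, hy', hshift, ← Summable.tsum_sub hysum hsum2]
  rw [bfun, ← tsum_mul_left]
  apply tsum_congr
  intro m
  have h2 := bc_succ α m
  linear_combination ((y:ℝ):ℂ)^m * h2

lemma bfun_mul_exp_const (α : ℂ) {t : ℝ} (h0 : 0 ≤ t) (h1 : t < 1) :
    bfun α t * Complex.exp (α * ((Real.log (1 - t) : ℝ) : ℂ)) = 1 := by
  set h : ℝ → ℂ := fun y => bfun α y * Complex.exp (α * ((Real.log (1 - y) : ℝ) : ℂ)) with hh
  have hderiv : ∀ y : ℝ, |y| < 1 → HasDerivAt h 0 y := by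
    intro y hy
    have hy1 : (1:ℝ) - y ≠ 0 := by
      rcases abs_lt.1 hy with ⟨_, h2⟩
      intro h
      linarith
    have hlog : HasDerivAt (fun y : ℝ => Real.log (1 - y)) ((1-y)⁻¹ * (-1)) y := by
      have hv : HasDerivAt (fun y : ℝ => 1 - y) (-1) y := by
        simpa using (hasDerivAt_id y).const_sub 1
      exact (Real.hasDerivAt_log hy1).comp y hv
    have hexp : HasDerivAt (fun y : ℝ => Complex.exp (α * ((Real.log (1 - y) : ℝ) : ℂ)))
        (Complex.exp (α * ((Real.log (1 - y) : ℝ) : ℂ)) * (α * (((1-y)⁻¹ * (-1) : ℝ) : ℂ))) y := by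
      exact ((hlog.ofReal_comp).const_mul α).cexp
    have hmul := (bfun_hasDerivAt α hy).mul hexp
    have hode := bfun_ode α hy
    refine HasDerivAt.congr_deriv hmul ?_
    have hc : ((1:ℝ) - y : ℝ) ≠ 0 := hy1
    have hcC : (1 - ((y:ℝ):ℂ)) ≠ 0 := by
      intro hq
      apply hc
      have := congrArg Complex.re hq
      simpa using this
    have hb' : bfun' α y = α * bfun α y / (1 - ((y:ℝ):ℂ)) := by
      field_simp
      linear_combination hode
    rw [hb']
    push_cast
    field_simp
    ring
  have hcont : ContinuousOn h (Set.Icc 0 t) := by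
    intro y hy
    have hy' : |y| < 1 := by
      rcases hy with ⟨ha, hb⟩
      rw [abs_lt]
      constructor <;> linarith
    exact (hderiv y hy').continuousAt.continuousWithinAt
  have hder : ∀ y ∈ Set.Ico 0 t, HasDerivWithinAt h 0 (Set.Ici y) y := by
    intro y hy
    have hy' : |y| < 1 := by
      rcases hy with ⟨ha, hb⟩
      rw [abs_lt]
      constructor <;> linarith
    exact (hderiv y hy').hasDerivWithinAt
  have := constant_of_has_deriv_right_zero hcont hder t (Set.mem_Icc.2 ⟨h0, le_refl t⟩)
  rw [hh] at this
  simp only at this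
  rw [this]
  have hb0 : bfun α 0 = 1 := by
    rw [bfun]
    rw [tsum_eq_single 0]
    · simp [bc_zero]
    · intro m hm
      match m, hm with
      | (j+1), _ => simp
  rw [hb0]
  simp

lemma binomial_tsum (α : ℂ) {t : ℝ} (h0 : 0 ≤ t) (h1 : t < 1) :
    ∑' m : ℕ, bc α m * ((t:ℝ):ℂ) ^ m = ((1 - t : ℝ) : ℂ) ^ (-α) := by
  have h1t : (0:ℝ) < 1 - t := by linarith
  have hne : ((1 - t : ℝ) : ℂ) ≠ 0 := by
    simpa using Complex.ofReal_ne_zero.2 (ne_of_gt h1t)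
  rw [Complex.cpow_def_of_ne_zero hne]
  have hlog : Complex.log ((1 - t : ℝ) : ℂ) = ((Real.log (1 - t) : ℝ) : ℂ) :=
    (Complex.ofReal_log (le_of_lt h1t)).symm
  rw [hlog]
  have hkey := bfun_mul_exp_const α h0 h1
  have hexp_ne : Complex.exp (α * ((Real.log (1 - t) : ℝ) : ℂ)) ≠ 0 := Complex.exp_ne_zero _
  have : bfun α t = (Complex.exp (α * ((Real.log (1 - t) : ℝ) : ℂ)))⁻¹ := by
    field_simp at hkey ⊢
    linear_combination hkey
  rw [bfun] at this
  rw [this, ← Complex.exp_neg]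
  congr 1
  ring

lemma triangle_sum {β : Type*} [AddCommMonoid β] (k : ℕ) (h : ℕ → ℕ → β) :
    ∑ j ∈ Finset.range (k+1), ∑ M ∈ Finset.range (k+1-j), h j M
      = ∑ N ∈ Finset.range (k+1), ∑ j ∈ Finset.range (N+1), h j (N-j) := by
  induction k with
  | zero => simp
  | succ k ih =>
    have step1 : ∀ j ∈ Finset.range (k+2),
        ∑ M ∈ Finset.range (k+2-j), h j M
          = (∑ M ∈ Finset.range (k+1-j), h j M) + h j (k+1-j) := by
      intro j hj
      have hj' : j ≤ k + 1 := by simpa [Nat.lt_succ_iff] using Finset.mem_range.1 hj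
      have e : k+2-j = (k+1-j)+1 := by omega
      rw [e, Finset.sum_range_succ]
    rw [Finset.sum_congr rfl step1, Finset.sum_add_distrib]
    rw [Finset.sum_range_succ (fun j => ∑ M ∈ Finset.range (k+1-j), h j M)]
    simp only [Nat.sub_self, Finset.range_zero, Finset.sum_empty, add_zero]
    rw [ih, Finset.sum_range_succ
      (fun N => ∑ j ∈ Finset.range (N+1), h j (N-j)) (k+1)]

lemma cauchy_coeff_abc (a b c : ℂ) (M : ℕ) :
    ∑ n ∈ Finset.range (M+1),
      (pochC a n * pochC b n / (Complex.Gamma (c+(n:ℂ)) * (n.factorial : ℂ)))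
        * (bc (c-a-b) (M-n))
    = pochC (c-a) M * pochC (c-b) M / (Complex.Gamma (c+(M:ℂ)) * (M.factorial : ℂ)) := by
  have key : ∀ n ∈ Finset.range (M+1),
      (pochC a n * pochC b n / (Complex.Gamma (c+(n:ℂ)) * (n.factorial : ℂ)))
        * (bc (c-a-b) (M-n))
      = ((M.choose n : ℂ) * pochC a n * pochC b n * pochC (c-a-b) (M-n) * pochC (c+n) (M-n))
          * ((Complex.Gamma (c+(M:ℂ)))⁻¹ * ((M.factorial : ℂ))⁻¹) := by
    intro n hn
    have hnM : n ≤ M := by simpa [Nat.lt_succ_iff] using Finset.mem_range.1 hn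
    have eG : (Complex.Gamma (c+(n:ℂ)))⁻¹
        = pochC (c+(n:ℂ)) (M-n) * (Complex.Gamma (c+(M:ℂ)))⁻¹ := by
      rw [Gamma_inv_shift (c+(n:ℂ)) (M-n)]
      congr 2
      push_cast [Nat.cast_sub hnM]
      ring
    have eft := Nat.choose_mul_factorial_mul_factorial hnM
    have eftC : (M.choose n : ℂ) * (n.factorial : ℂ) * ((M-n).factorial : ℂ) = (M.factorial : ℂ) := by
      exact_mod_cast congrArg (Nat.cast : ℕ → ℂ) eft
    have hfn : (n.factorial : ℂ) ≠ 0 := Nat.cast_ne_zero.2 (Nat.factorial_ne_zero n)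
    have hfm : ((M-n).factorial : ℂ) ≠ 0 := Nat.cast_ne_zero.2 (Nat.factorial_ne_zero (M-n))
    have hfM : ((M.factorial : ℂ)) ≠ 0 := Nat.cast_ne_zero.2 (Nat.factorial_ne_zero M)
    have h2 : ((n.factorial:ℂ))⁻¹ * (((M-n).factorial:ℂ))⁻¹ = (M.choose n:ℂ) * ((M.factorial:ℂ))⁻¹ := by
      field_simp
      linear_combination -eftC
    rw [bc]
    simp only [div_eq_mul_inv, mul_inv]
    rw [eG]
    linear_combination (pochC a n * pochC b n * pochC (c-a-b) (M-n) * pochC (c+(n:ℂ)) (M-n)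
      * (Complex.Gamma (c+(M:ℂ)))⁻¹) * h2
  rw [Finset.sum_congr rfl key, ← Finset.sum_mul, SS_c a b c M]
  simp only [div_eq_mul_inv, mul_inv]

lemma per_j (a b c : ℂ) {t : ℝ} (h0 : 0 ≤ t) (h1 : t < 1) :
    (∑' n : ℕ, pochC a n * pochC b n / (Complex.Gamma (c+(n:ℂ)) * (n.factorial : ℂ)) * ((t:ℝ):ℂ)^n)
      * ((1-t:ℝ):ℂ)^(-(c-a-b))
    = ∑' M : ℕ, pochC (c-a) M * pochC (c-b) M / (Complex.Gamma (c+(M:ℂ)) * (M.factorial : ℂ)) * ((t:ℝ):ℂ)^M := by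
  set z : ℂ := ((t:ℝ):ℂ) with hzdef
  have hz : ‖z‖ < 1 := by
    rw [hzdef, Complex.norm_real, Real.norm_eq_abs, abs_of_nonneg h0]
    exact h1
  have hf : Summable (fun n : ℕ => ‖pochC a n * pochC b n / (Complex.Gamma (c+(n:ℂ)) * (n.factorial : ℂ)) * z^n‖) := by
    have := summable_norm_ferrers_aux a b (1-c) z hz
    simp only [show ∀ n : ℕ, (n:ℂ)+1-(1-c) = c+(n:ℂ) from fun n => by ring] at this
    exact this
  have hg : Summable (fun m : ℕ => ‖bc (c-a-b) m * z^m‖) := summable_norm_bc _ hz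
  have hbin : ∑' m : ℕ, bc (c-a-b) m * z^m = ((1-t:ℝ):ℂ)^(-(c-a-b)) :=
    binomial_tsum (c-a-b) h0 h1
  rw [← hbin]
  rw [tsum_mul_tsum_eq_tsum_sum_antidiagonal_of_summable_norm hf hg]
  apply tsum_congr
  intro M
  have step : ∑ p ∈ Finset.HasAntidiagonal.antidiagonal M,
      (pochC a p.1 * pochC b p.1 / (Complex.Gamma (c+(p.1:ℂ)) * (p.1.factorial : ℂ)) * z^p.1)
        * (bc (c-a-b) p.2 * z^p.2)
      = ∑ p ∈ Finset.HasAntidiagonal.antidiagonal M,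
      ((pochC a p.1 * pochC b p.1 / (Complex.Gamma (c+(p.1:ℂ)) * (p.1.factorial : ℂ)))
        * (bc (c-a-b) p.2)) * z^M := by
    apply Finset.sum_congr rfl
    intro p hp
    have hsum := Finset.HasAntidiagonal.mem_antidiagonal.1 hp
    rw [← hsum, pow_add]
    ring
  rw [step, ← Finset.sum_mul]
  rw [Nat.sum_antidiagonal_eq_sum_range_succ
    (fun n m => (pochC a n * pochC b n / (Complex.Gamma (c+(n:ℂ)) * (n.factorial : ℂ))) * (bc (c-a-b) m))]
  rw [cauchy_coeff_abc]

lemma final_coeff (k N : ℕ) (μ : ℂ) (hNk : N ≤ k) :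
    (k.factorial : ℂ) * ∑ j ∈ Finset.range (N+1),
      pochC (2*μ) j / (((k-j).factorial : ℂ) * ((j.factorial : ℂ))) *
        (pochC (((k:ℂ)+2*μ+1)+(j:ℂ)) (N-j) * pochC ((j:ℂ)-(k:ℂ)) (N-j) /
          (Complex.Gamma ((N:ℂ)+1+μ) * ((N-j).factorial : ℂ)))
    = pochC (-(k:ℂ)) N * pochC ((k:ℂ)+1) N / (Complex.Gamma ((N:ℂ)+1+μ) * (N.factorial : ℂ)) := by
  have hkN : (((k-N).factorial : ℕ) : ℂ) ≠ 0 := Nat.cast_ne_zero.2 (Nat.factorial_ne_zero _)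
  have hNf : ((N.factorial : ℂ)) ≠ 0 := Nat.cast_ne_zero.2 (Nat.factorial_ne_zero _)
  have key : ∀ j ∈ Finset.range (N+1),
      pochC (2*μ) j / (((k-j).factorial : ℂ) * ((j.factorial : ℂ))) *
        (pochC (((k:ℂ)+2*μ+1)+(j:ℂ)) (N-j) * pochC ((j:ℂ)-(k:ℂ)) (N-j) /
          (Complex.Gamma ((N:ℂ)+1+μ) * ((N-j).factorial : ℂ)))
      = ((-1:ℂ)^j * (N.choose j : ℂ) * pochC (2*μ) j * pochC (((k:ℂ)+2*μ+1)+(j:ℂ)) (N-j))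
        * ((-1:ℂ)^N / (((k-N).factorial : ℂ) * (N.factorial : ℂ))
            * (Complex.Gamma ((N:ℂ)+1+μ))⁻¹) := by
    intro j hj
    have hjN : j ≤ N := by simpa [Nat.lt_succ_iff] using Finset.mem_range.1 hj
    have hjk : j ≤ k := le_trans hjN hNk
    have e1 : (j:ℂ)-(k:ℂ) = -(((k-j:ℕ)):ℂ) := by
      push_cast [Nat.cast_sub hjk]
      ring
    have hp := pochC_neg_nat (p := k-j) (q := N-j) (by omega)
    have e2 : k-j-(N-j) = k-N := by omega
    rw [e2] at hp
    have hp2 : pochC (-(((k-j:ℕ)):ℂ)) (N-j)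
        = (-1:ℂ)^(N-j) * (((k-j).factorial : ℂ)) / (((k-N).factorial : ℂ)) := by
      rw [eq_div_iff hkN]
      exact hp
    have chooseC : (N.choose j : ℂ) * ((j.factorial : ℂ)) * (((N-j).factorial : ℂ)) = (N.factorial : ℂ) := by
      exact_mod_cast congrArg (Nat.cast : ℕ → ℂ) (Nat.choose_mul_factorial_mul_factorial hjN)
    have hsign : (-1:ℂ)^(N-j) * (-1:ℂ)^j = (-1:ℂ)^N := by
      rw [← pow_add]
      congr 1
      omega
    have h12 : ((-1:ℂ)^j)*((-1:ℂ)^j) = 1 := by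
      rw [← pow_add, ← two_mul, pow_mul]
      norm_num
    have hsign2 : (-1:ℂ)^(N-j) = (-1:ℂ)^N * (-1:ℂ)^j := by
      calc (-1:ℂ)^(N-j) = (-1:ℂ)^(N-j) * ((-1:ℂ)^j * (-1:ℂ)^j) := by rw [h12, mul_one]
        _ = ((-1:ℂ)^(N-j) * (-1:ℂ)^j) * (-1:ℂ)^j := by ring
        _ = (-1:ℂ)^N * (-1:ℂ)^j := by rw [hsign]
    have hfj : ((j.factorial : ℂ)) ≠ 0 := Nat.cast_ne_zero.2 (Nat.factorial_ne_zero _)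
    have hfNj : (((N-j).factorial : ℂ)) ≠ 0 := Nat.cast_ne_zero.2 (Nat.factorial_ne_zero _)
    have hfkj : (((k-j).factorial : ℂ)) ≠ 0 := Nat.cast_ne_zero.2 (Nat.factorial_ne_zero _)
    have hinv : ((j.factorial:ℂ))⁻¹ * (((N-j).factorial:ℂ))⁻¹
        = (N.choose j : ℂ) * ((N.factorial:ℂ))⁻¹ := by
      field_simp
      linear_combination -chooseC
    have hcancel : (((k-j).factorial:ℂ)) * (((k-j).factorial:ℂ))⁻¹ = 1 := mul_inv_cancel₀ hfkj
    rw [e1, hp2, hsign2]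
    simp only [div_eq_mul_inv, mul_inv]
    linear_combination (pochC (2*μ) j * pochC (((k:ℂ)+2*μ+1)+(j:ℂ)) (N-j)
        * (Complex.Gamma ((N:ℂ)+1+μ))⁻¹ * (-1:ℂ)^N * (-1:ℂ)^j * (((k-N).factorial:ℂ))⁻¹
        * ((j.factorial:ℂ))⁻¹ * (((N-j).factorial:ℂ))⁻¹) * hcancel
      + (pochC (2*μ) j * pochC (((k:ℂ)+2*μ+1)+(j:ℂ)) (N-j)
        * (Complex.Gamma ((N:ℂ)+1+μ))⁻¹ * (-1:ℂ)^N * (-1:ℂ)^j * (((k-N).factorial:ℂ))⁻¹) * hinv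
  rw [Finset.sum_congr rfl key, ← Finset.sum_mul, starstar N (2*μ) ((k:ℂ)+2*μ+1)]
  rw [show (k:ℂ)+2*μ+1-(2*μ) = (k:ℂ)+1 from by ring]
  have hpk := pochC_neg_nat (p := k) (q := N) hNk
  have hcancelN : (((k-N).factorial:ℂ)) * (((k-N).factorial:ℂ))⁻¹ = 1 := mul_inv_cancel₀ hkN
  simp only [div_eq_mul_inv, mul_inv]
  linear_combination (-(pochC ((k:ℂ)+1) N * ((N.factorial:ℂ))⁻¹ * (Complex.Gamma ((N:ℂ)+1+μ))⁻¹
      * (((k-N).factorial:ℂ))⁻¹)) * hpk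
    + (pochC ((k:ℂ)+1) N * ((N.factorial:ℂ))⁻¹ * (Complex.Gamma ((N:ℂ)+1+μ))⁻¹
      * pochC (-(k:ℂ)) N) * hcancelN

lemma cpowE {r : ℝ} (hr : 0 < r) (w : ℂ) :
    ((r:ℝ):ℂ)^w = Complex.exp (w * ((Real.log r : ℝ):ℂ)) := by
  rw [Complex.cpow_def_of_ne_zero (Complex.ofReal_ne_zero.2 (ne_of_gt hr)),
    ← Complex.ofReal_log hr.le, mul_comm]

lemma cpow_nat_exp {r : ℝ} (hr : 0 < r) (j : ℕ) :
    ((r:ℝ):ℂ)^j = Complex.exp ((j:ℂ) * ((Real.log r : ℝ):ℂ)) := by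
  rw [← Complex.cpow_natCast, cpowE hr]

lemma prefactor_lhs (x : ℝ) (hp : 0 < 1+x) (hm : 0 < 1-x) (μ : ℂ) :
    (((1+x)/(1-x) : ℝ):ℂ)^(-μ/2) = (((1-x)/(1+x) : ℝ):ℂ)^(μ/2) := by
  have hA : (0:ℝ) < (1+x)/(1-x) := div_pos hp hm
  have hB : (0:ℝ) < (1-x)/(1+x) := div_pos hm hp
  rw [cpowE hA, cpowE hB]
  congr 1
  rw [Real.log_div (ne_of_gt hp) (ne_of_gt hm), Real.log_div (ne_of_gt hm) (ne_of_gt hp)]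
  push_cast
  ring

lemma prefactor_eq (x : ℝ) (hp : 0 < 1+x) (hm : 0 < 1-x) (μ : ℂ) (j : ℕ) :
    (2:ℂ)^μ * ((1+x : ℝ):ℂ)^(-μ) * ((((1-x)/(1+x)) : ℝ):ℂ)^((j:ℂ)/2)
      * ((((1+x)/(1-x)) : ℝ):ℂ)^((-(j:ℂ)-μ)/2)
    = ((((1-x)/(1+x)) : ℝ):ℂ)^(μ/2) * ((((1-x)/2) : ℝ):ℂ)^j
      * ((((1+x)/2) : ℝ):ℂ)^(-((j:ℂ)+μ)) := by
  have hA : (0:ℝ) < (1+x)/(1-x) := div_pos hp hm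
  have hB : (0:ℝ) < (1-x)/(1+x) := div_pos hm hp
  have ht : (0:ℝ) < (1-x)/2 := by linarith
  have hs : (0:ℝ) < (1+x)/2 := by linarith
  have h2 : (0:ℝ) < 2 := by norm_num
  rw [show (2:ℂ) = ((2:ℝ):ℂ) by norm_num]
  rw [cpowE h2, cpowE hp, cpowE hB, cpowE hA, cpowE hB, cpow_nat_exp ht, cpowE hs]
  rw [← Complex.exp_add, ← Complex.exp_add, ← Complex.exp_add, ← Complex.exp_add, ← Complex.exp_add]
  congr 1
  rw [Real.log_div (ne_of_gt hm) (ne_of_gt hp), Real.log_div (ne_of_gt hp) (ne_of_gt hm),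
    Real.log_div (ne_of_gt hm) (by norm_num : (2:ℝ) ≠ 0),
    Real.log_div (ne_of_gt hp) (by norm_num : (2:ℝ) ≠ 0)]
  push_cast
  ring


theorem stmt13 (k : ℕ) (μ : ℂ) (x : ℝ) (hx : -1 < x) (hx1 : x < 1) :
    ferrersP (k : ℂ) (-μ) x =
      (2 : ℂ) ^ μ * ((1 + x : ℝ) : ℂ) ^ (-μ) * (k.factorial : ℂ) *
        ∑ j ∈ Finset.range (k + 1),
          pochC (2 * μ) j / (((k - j).factorial : ℂ) * (j.factorial : ℂ)) *
            (((1 - x) / (1 + x) : ℝ) : ℂ) ^ ((j : ℂ) / 2) *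
            ferrersP ((k : ℂ) + μ) (-(j : ℂ) - μ) x := by
  have hp : (0:ℝ) < 1 + x := by linarith
  have hm : (0:ℝ) < 1 - x := by linarith
  have ht0 : (0:ℝ) ≤ (1-x)/2 := by linarith
  have ht1 : (1-x)/2 < 1 := by linarith
  -- LHS transformation
  have hLHS : ferrersP (k:ℂ) (-μ) x
      = (((1-x)/(1+x) : ℝ):ℂ)^(μ/2) *
        ∑ N ∈ Finset.range (k+1),
          pochC (-(k:ℂ)) N * pochC ((k:ℂ)+1) N /
            (Complex.Gamma ((N:ℂ)+1+μ) * (N.factorial:ℂ)) * (((1-x)/2:ℝ):ℂ)^N := by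
    rw [ferrersP, prefactor_lhs x hp hm μ]
    congr 1
    rw [tsum_eq_sum (s := Finset.range (k+1))
      (fun N hN => by
        have hkN : k < N := by simpa [Nat.lt_succ_iff] using hN
        rw [pochC_neg_nat_eq_zero hkN]
        simp)]
    apply Finset.sum_congr rfl
    intro N _
    rw [show (N:ℂ)+1 - -μ = (N:ℂ)+1+μ from by ring]
  -- per-j transformation
  have hstep : ∀ j ∈ Finset.range (k+1),
      (2:ℂ)^μ * ((1+x:ℝ):ℂ)^(-μ) *
        (pochC (2*μ) j / (((k-j).factorial:ℂ) * (j.factorial:ℂ)) *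
          (((1-x)/(1+x) : ℝ):ℂ)^((j:ℂ)/2) * ferrersP ((k:ℂ)+μ) (-(j:ℂ)-μ) x)
      = (((1-x)/(1+x) : ℝ):ℂ)^(μ/2) *
          ∑ M ∈ Finset.range (k+1-j),
            (pochC (2*μ) j / (((k-j).factorial:ℂ) * (j.factorial:ℂ)) *
              (pochC (((k:ℂ)+2*μ+1)+(j:ℂ)) M * pochC ((j:ℂ)-(k:ℂ)) M /
                (Complex.Gamma (((j:ℂ)+μ+1)+(M:ℂ)) * (M.factorial:ℂ))))
            * (((1-x)/2:ℝ):ℂ)^(j+M) := by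
    intro j hj
    have hjk : j ≤ k := by simpa [Nat.lt_succ_iff] using Finset.mem_range.1 hj
    have hfer : ferrersP ((k:ℂ)+μ) (-(j:ℂ)-μ) x
        = (((1+x)/(1-x):ℝ):ℂ)^((-(j:ℂ)-μ)/2) *
          ∑' n : ℕ, pochC (-((k:ℂ)+μ)) n * pochC ((k:ℂ)+μ+1) n /
            (Complex.Gamma ((((j:ℂ)+μ+1))+(n:ℂ)) * (n.factorial:ℂ)) * (((1-x)/2:ℝ):ℂ)^n := by
      rw [ferrersP]
      congr 1
      apply tsum_congr
      intro n
      rw [show (n:ℂ)+1-(-(j:ℂ)-μ) = ((j:ℂ)+μ+1)+(n:ℂ) from by ring]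
    have hper := per_j (-((k:ℂ)+μ)) ((k:ℂ)+μ+1) ((j:ℂ)+μ+1) ht0 ht1
    rw [show ((j:ℂ)+μ+1) - (-((k:ℂ)+μ)) - ((k:ℂ)+μ+1) = (j:ℂ)+μ from by ring] at hper
    rw [show ((j:ℂ)+μ+1) - (-((k:ℂ)+μ)) = ((k:ℂ)+2*μ+1)+(j:ℂ) from by ring] at hper
    rw [show ((j:ℂ)+μ+1) - ((k:ℂ)+μ+1) = (j:ℂ)-(k:ℂ) from by ring] at hper
    rw [show (1 - (1-x)/2 : ℝ) = (1+x)/2 from by ring] at hper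
    have htr : (∑' M : ℕ, pochC (((k:ℂ)+2*μ+1)+(j:ℂ)) M * pochC ((j:ℂ)-(k:ℂ)) M /
          (Complex.Gamma (((j:ℂ)+μ+1)+(M:ℂ)) * (M.factorial:ℂ)) * (((1-x)/2:ℝ):ℂ)^M)
        = ∑ M ∈ Finset.range (k+1-j),
            pochC (((k:ℂ)+2*μ+1)+(j:ℂ)) M * pochC ((j:ℂ)-(k:ℂ)) M /
              (Complex.Gamma (((j:ℂ)+μ+1)+(M:ℂ)) * (M.factorial:ℂ)) * (((1-x)/2:ℝ):ℂ)^M := by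
      apply tsum_eq_sum
      intro M hM
      have hkjM : k - j < M := by
        simp only [Finset.mem_range] at hM
        omega
      rw [show (j:ℂ)-(k:ℂ) = -(((k-j:ℕ)):ℂ) from by push_cast [Nat.cast_sub hjk]; ring]
      rw [pochC_neg_nat_eq_zero hkjM]
      simp
    have hpre := prefactor_eq x hp hm μ j
    rw [hfer]
    calc (2:ℂ)^μ * ((1+x:ℝ):ℂ)^(-μ) *
          (pochC (2*μ) j / (((k-j).factorial:ℂ) * (j.factorial:ℂ)) *
            (((1-x)/(1+x) : ℝ):ℂ)^((j:ℂ)/2) *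
            ((((1+x)/(1-x):ℝ):ℂ)^((-(j:ℂ)-μ)/2) *
              ∑' n : ℕ, pochC (-((k:ℂ)+μ)) n * pochC ((k:ℂ)+μ+1) n /
                (Complex.Gamma ((((j:ℂ)+μ+1))+(n:ℂ)) * (n.factorial:ℂ)) * (((1-x)/2:ℝ):ℂ)^n))
        = ((2:ℂ)^μ * ((1+x:ℝ):ℂ)^(-μ) * (((1-x)/(1+x) : ℝ):ℂ)^((j:ℂ)/2)
            * (((1+x)/(1-x):ℝ):ℂ)^((-(j:ℂ)-μ)/2)) *
          (pochC (2*μ) j / (((k-j).factorial:ℂ) * (j.factorial:ℂ)) *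
            ∑' n : ℕ, pochC (-((k:ℂ)+μ)) n * pochC ((k:ℂ)+μ+1) n /
              (Complex.Gamma ((((j:ℂ)+μ+1))+(n:ℂ)) * (n.factorial:ℂ)) * (((1-x)/2:ℝ):ℂ)^n) := by
          ring
      _ = ((((1-x)/(1+x)) : ℝ):ℂ)^(μ/2) * ((((1-x)/2) : ℝ):ℂ)^j
            * ((((1+x)/2) : ℝ):ℂ)^(-((j:ℂ)+μ)) *
          (pochC (2*μ) j / (((k-j).factorial:ℂ) * (j.factorial:ℂ)) *
            ∑' n : ℕ, pochC (-((k:ℂ)+μ)) n * pochC ((k:ℂ)+μ+1) n /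
              (Complex.Gamma ((((j:ℂ)+μ+1))+(n:ℂ)) * (n.factorial:ℂ)) * (((1-x)/2:ℝ):ℂ)^n) := by
          rw [hpre]
      _ = (((1-x)/(1+x) : ℝ):ℂ)^(μ/2) *
          (pochC (2*μ) j / (((k-j).factorial:ℂ) * (j.factorial:ℂ))) *
          ((((1-x)/2) : ℝ):ℂ)^j *
          ((∑' n : ℕ, pochC (-((k:ℂ)+μ)) n * pochC ((k:ℂ)+μ+1) n /
              (Complex.Gamma ((((j:ℂ)+μ+1))+(n:ℂ)) * (n.factorial:ℂ)) * (((1-x)/2:ℝ):ℂ)^n)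
            * ((((1+x)/2) : ℝ):ℂ)^(-((j:ℂ)+μ))) := by
          ring
      _ = (((1-x)/(1+x) : ℝ):ℂ)^(μ/2) *
          (pochC (2*μ) j / (((k-j).factorial:ℂ) * (j.factorial:ℂ))) *
          ((((1-x)/2) : ℝ):ℂ)^j *
          ∑ M ∈ Finset.range (k+1-j),
            pochC (((k:ℂ)+2*μ+1)+(j:ℂ)) M * pochC ((j:ℂ)-(k:ℂ)) M /
              (Complex.Gamma (((j:ℂ)+μ+1)+(M:ℂ)) * (M.factorial:ℂ)) * (((1-x)/2:ℝ):ℂ)^M := by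
          rw [hper, htr]
      _ = (((1-x)/(1+x) : ℝ):ℂ)^(μ/2) *
          ∑ M ∈ Finset.range (k+1-j),
            (pochC (2*μ) j / (((k-j).factorial:ℂ) * (j.factorial:ℂ)) *
              (pochC (((k:ℂ)+2*μ+1)+(j:ℂ)) M * pochC ((j:ℂ)-(k:ℂ)) M /
                (Complex.Gamma (((j:ℂ)+μ+1)+(M:ℂ)) * (M.factorial:ℂ))))
            * (((1-x)/2:ℝ):ℂ)^(j+M) := by
          rw [Finset.mul_sum, Finset.mul_sum]
          apply Finset.sum_congr rfl
          intro M _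
          rw [pow_add]
          ring
  -- assembly
  rw [hLHS]
  have hdist : (2:ℂ)^μ * ((1+x:ℝ):ℂ)^(-μ) * (k.factorial:ℂ) *
      ∑ j ∈ Finset.range (k+1),
        pochC (2*μ) j / (((k-j).factorial:ℂ) * (j.factorial:ℂ)) *
          (((1-x)/(1+x) : ℝ):ℂ)^((j:ℂ)/2) * ferrersP ((k:ℂ)+μ) (-(j:ℂ)-μ) x
      = (k.factorial:ℂ) * ∑ j ∈ Finset.range (k+1),
          (2:ℂ)^μ * ((1+x:ℝ):ℂ)^(-μ) *
            (pochC (2*μ) j / (((k-j).factorial:ℂ) * (j.factorial:ℂ)) *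
              (((1-x)/(1+x) : ℝ):ℂ)^((j:ℂ)/2) * ferrersP ((k:ℂ)+μ) (-(j:ℂ)-μ) x) := by
    rw [← Finset.mul_sum]
    ring
  rw [hdist, Finset.sum_congr rfl hstep, ← Finset.mul_sum]
  rw [triangle_sum k (fun j M =>
    (pochC (2*μ) j / (((k-j).factorial:ℂ) * (j.factorial:ℂ)) *
      (pochC (((k:ℂ)+2*μ+1)+(j:ℂ)) M * pochC ((j:ℂ)-(k:ℂ)) M /
        (Complex.Gamma (((j:ℂ)+μ+1)+(M:ℂ)) * (M.factorial:ℂ))))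
    * (((1-x)/2:ℝ):ℂ)^(j+M))]
  have hfin : ∀ N ∈ Finset.range (k+1),
      (k.factorial : ℂ) * ∑ j ∈ Finset.range (N+1),
        (pochC (2*μ) j / (((k-j).factorial:ℂ) * (j.factorial:ℂ)) *
          (pochC (((k:ℂ)+2*μ+1)+(j:ℂ)) (N-j) * pochC ((j:ℂ)-(k:ℂ)) (N-j) /
            (Complex.Gamma (((j:ℂ)+μ+1)+((N-j:ℕ):ℂ)) * ((N-j).factorial:ℂ))))
        * (((1-x)/2:ℝ):ℂ)^(j+(N-j))
      = pochC (-(k:ℂ)) N * pochC ((k:ℂ)+1) N /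
          (Complex.Gamma ((N:ℂ)+1+μ) * (N.factorial:ℂ)) * (((1-x)/2:ℝ):ℂ)^N := by
    intro N hN
    have hNk : N ≤ k := by simpa [Nat.lt_succ_iff] using Finset.mem_range.1 hN
    have hterm : ∀ j ∈ Finset.range (N+1),
        (pochC (2*μ) j / (((k-j).factorial:ℂ) * (j.factorial:ℂ)) *
          (pochC (((k:ℂ)+2*μ+1)+(j:ℂ)) (N-j) * pochC ((j:ℂ)-(k:ℂ)) (N-j) /
            (Complex.Gamma (((j:ℂ)+μ+1)+((N-j:ℕ):ℂ)) * ((N-j).factorial:ℂ))))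
          * (((1-x)/2:ℝ):ℂ)^(j+(N-j))
        = (pochC (2*μ) j / (((k-j).factorial:ℂ) * (j.factorial:ℂ)) *
            (pochC (((k:ℂ)+2*μ+1)+(j:ℂ)) (N-j) * pochC ((j:ℂ)-(k:ℂ)) (N-j) /
              (Complex.Gamma ((N:ℂ)+1+μ) * ((N-j).factorial:ℂ))))
          * (((1-x)/2:ℝ):ℂ)^N := by
      intro j hj
      have hjN : j ≤ N := by simpa [Nat.lt_succ_iff] using Finset.mem_range.1 hj
      rw [show j+(N-j) = N from by omega]
      rw [show ((j:ℂ)+μ+1)+((N-j:ℕ):ℂ) = (N:ℂ)+1+μ from by push_cast [Nat.cast_sub hjN]; ring]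
    rw [Finset.sum_congr rfl hterm, ← Finset.sum_mul, ← mul_assoc,
      final_coeff k N μ hNk]
  rw [mul_left_comm]
  congr 1
  rw [Finset.mul_sum]
  exact (Finset.sum_congr rfl hfin).symm
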